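/- Let γ be real with 0 < γ < 2, let a ≥ 2 and s ≥ 2 be natural numbers, and define M(s, η) = a^{s−1} + (2s−1)η − s + 1 for η ∈ ℕ. Then the series ∑_{η=1}^{∞} (2s−1) · ψ(γ, M(s, η)) · (−1)^{M(s, η)} converges; that is, its partial sums over η = 1, …, H have a finite limit as H → ∞. -/

import Mathlib

open Finset Filter

/-- Generalized binomial coefficient `C(x, m) = x (x-1) ⋯ (x-m+1) / m!`. -/
noncomputable def genBinom (x : ℝ) (m : ℕ) : ℝ :=
  (descPochhammer ℝ m).eval x / m.factorial

/-- Memory function `ψ(γ, m) = (-1)^m ⬝ C(1-γ, m)`. -/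
noncomputable def psi (γ : ℝ) (m : ℕ) : ℝ :=
  (-1) ^ m * genBinom (1 - γ) m

/-- Sampled time offset `M(s, η) = a^(s-1) + (2s-1)η - s + 1` of the adaptive memory
algorithm. -/
def Mfun (a s η : ℕ) : ℕ := a ^ (s - 1) + (2 * s - 1) * η - s + 1

namespace AdaptiveAux

/-- `Q x m = ∏_{j=1}^{m} (j - x)`. -/
noncomputable def Q (x : ℝ) (m : ℕ) : ℝ := ∏ k ∈ Finset.range m, ((k : ℝ) + 1 - x)

lemma Q_succ (x : ℝ) (m : ℕ) : Q x (m + 1) = Q x m * ((m : ℝ) + 1 - x) := by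
  simp [Q, Finset.prod_range_succ]

lemma Q_nonneg {x : ℝ} (hx : x < 1) (m : ℕ) : 0 ≤ Q x m := by
  refine Finset.prod_nonneg fun k _ => ?_
  have : (0 : ℝ) ≤ (k : ℝ) := Nat.cast_nonneg k
  linarith

lemma desc_eval {x : ℝ} (m : ℕ) :
    (descPochhammer ℝ (m + 1)).eval x = x * (-1 : ℝ) ^ m * Q x m := by
  induction m with
  | zero => simp [Q]
  | succ m ih =>
    rw [descPochhammer_succ_eval, ih, Q_succ]
    push_cast
    ring

/-- `g x c m = c * Q x m / (m+1)!`. -/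
noncomputable def g (x c : ℝ) (m : ℕ) : ℝ := c * Q x m / (m + 1).factorial

lemma g_nonneg {x : ℝ} (hx : x < 1) {c : ℝ} (hc : 0 ≤ c) (m : ℕ) : 0 ≤ g x c m :=
  div_nonneg (mul_nonneg hc (Q_nonneg hx m)) (by positivity)

lemma g_succ (x c : ℝ) (m : ℕ) :
    g x c (m + 1) = g x c m * (((m : ℝ) + 1 - x) / ((m : ℝ) + 2)) := by
  unfold g
  rw [Q_succ, Nat.factorial_succ]
  have h1 : ((m + 1 + 1 : ℕ) : ℝ) = (m : ℝ) + 2 := by push_cast; ring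
  rw [Nat.cast_mul, h1]
  have h2 : ((m + 1).factorial : ℝ) ≠ 0 := by positivity
  field_simp

lemma g_antitone {x : ℝ} (hx1 : -1 < x) (hx : x < 1) {c : ℝ} (hc : 0 ≤ c) :
    Antitone (g x c) := by
  refine antitone_nat_of_succ_le fun m => ?_
  rw [g_succ]
  have hm : (0 : ℝ) ≤ (m : ℝ) := Nat.cast_nonneg m
  have hratio : ((m : ℝ) + 1 - x) / ((m : ℝ) + 2) ≤ 1 := by
    rw [div_le_one (by linarith)]
    linarith
  have hratio0 : 0 ≤ ((m : ℝ) + 1 - x) / ((m : ℝ) + 2) := by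
    apply div_nonneg <;> linarith
  calc g x c m * (((m : ℝ) + 1 - x) / ((m : ℝ) + 2)) ≤ g x c m * 1 :=
        mul_le_mul_of_nonneg_left hratio (g_nonneg hx hc m)
    _ = g x c m := mul_one _

lemma g_le_exp {x : ℝ} (hx1 : -1 < x) (hx : x < 1) {c : ℝ} (hc : 0 ≤ c) (m : ℕ) :
    g x c m ≤ g x c 0 * Real.exp (-(1 + x) * ∑ k ∈ Finset.range m, (1 : ℝ) / ((k : ℝ) + 2)) := by
  induction m with
  | zero => simp
  | succ m ih =>
    rw [g_succ, Finset.sum_range_succ]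
    have hratio0 : 0 ≤ ((m : ℝ) + 1 - x) / ((m : ℝ) + 2) := by
      have : (0 : ℝ) ≤ (m : ℝ) := Nat.cast_nonneg m
      apply div_nonneg <;> linarith
    have hm2 : (0 : ℝ) < (m : ℝ) + 2 := by positivity
    have hratio_le : ((m : ℝ) + 1 - x) / ((m : ℝ) + 2)
        ≤ Real.exp (-(1 + x) * (1 / ((m : ℝ) + 2))) := by
      have := Real.add_one_le_exp (-(1 + x) * (1 / ((m : ℝ) + 2)))
      have heq : ((m : ℝ) + 1 - x) / ((m : ℝ) + 2)
          = -(1 + x) * (1 / ((m : ℝ) + 2)) + 1 := by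
        field_simp
        ring
      rw [heq]
      exact this
    have hg0 : 0 ≤ g x c 0 * Real.exp (-(1 + x) * ∑ k ∈ Finset.range m, (1 : ℝ) / ((k : ℝ) + 2)) :=
      mul_nonneg (g_nonneg hx hc 0) (Real.exp_pos _).le
    calc g x c m * (((m : ℝ) + 1 - x) / ((m : ℝ) + 2))
        ≤ (g x c 0 * Real.exp (-(1 + x) * ∑ k ∈ Finset.range m, (1 : ℝ) / ((k : ℝ) + 2)))
          * Real.exp (-(1 + x) * (1 / ((m : ℝ) + 2))) :=
          mul_le_mul ih hratio_le hratio0 hg0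
      _ = g x c 0 * Real.exp (-(1 + x) *
            ((∑ k ∈ Finset.range m, (1 : ℝ) / ((k : ℝ) + 2)) + 1 / ((m : ℝ) + 2))) := by
          rw [mul_assoc, ← Real.exp_add]
          congr 2
          ring

lemma sum_inv_tendsto :
    Tendsto (fun m : ℕ => ∑ k ∈ Finset.range m, (1 : ℝ) / ((k : ℝ) + 2)) atTop atTop := by
  have h := Real.tendsto_sum_range_one_div_nat_succ_atTop
  have h2 : Tendsto (fun m : ℕ => ∑ i ∈ Finset.range (m + 1), (1 : ℝ) / (i + 1)) atTop atTop :=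
    h.comp (tendsto_add_atTop_nat 1)
  have heq : ∀ m : ℕ, (∑ k ∈ Finset.range m, (1 : ℝ) / ((k : ℝ) + 2))
      = (∑ i ∈ Finset.range (m + 1), (1 : ℝ) / (i + 1)) - 1 := by
    intro m
    rw [Finset.sum_range_succ' (fun i => (1 : ℝ) / (i + 1)) m]
    push_cast
    ring_nf
  simp only [heq]
  exact h2.atTop_add tendsto_const_nhds

lemma g_tendsto_zero {x : ℝ} (hx1 : -1 < x) (hx : x < 1) {c : ℝ} (hc : 0 ≤ c) :
    Tendsto (g x c) atTop (nhds 0) := by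
  have h1x : 0 < 1 + x := by linarith
  have hS : Tendsto (fun m : ℕ => -(1 + x) * ∑ k ∈ Finset.range m, (1 : ℝ) / ((k : ℝ) + 2))
      atTop atBot := by
    have h := sum_inv_tendsto.const_mul_atTop h1x
    have h2 := tendsto_neg_atTop_atBot.comp h
    refine h2.congr fun m => ?_
    simp only [Function.comp]
    ring
  have hexp : Tendsto (fun m : ℕ => g x c 0 *
      Real.exp (-(1 + x) * ∑ k ∈ Finset.range m, (1 : ℝ) / ((k : ℝ) + 2))) atTop (nhds 0) := by
    have := (Real.tendsto_exp_atBot.comp hS).const_mul (g x c 0)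
    simpa using this
  refine squeeze_zero (fun m => g_nonneg hx hc m) (fun m => g_le_exp hx1 hx hc m) hexp

end AdaptiveAux

open AdaptiveAux in
theorem adaptive_interval_series_converges (γ : ℝ) (hγ0 : 0 < γ) (hγ2 : γ < 2)
    (a s : ℕ) (ha : 2 ≤ a) (hs : 2 ≤ s) :
    ∃ L : ℝ, Filter.Tendsto
      (fun H : ℕ => ∑ η ∈ Finset.Icc 1 H,
        (2 * (s : ℝ) - 1) * psi γ (Mfun a s η) * (-1 : ℝ) ^ Mfun a s η)
      Filter.atTop (nhds L) := by
  set x : ℝ := 1 - γ with hxdef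
  have hx1 : -1 < x := by simp [hxdef]; linarith
  have hx : x < 1 := by simp [hxdef]; linarith
  -- s ≤ a^(s-1)
  have hsle : s ≤ a ^ (s - 1) := by
    calc s ≤ 2 ^ (s - 1) := by
          obtain ⟨t, rfl⟩ : ∃ t, s = t + 2 := ⟨s - 2, by omega⟩
          clear hs
          induction t with
          | zero => norm_num
          | succ t ih =>
            have h1 : 2 ^ (t + 2 - 1) ≥ 1 := Nat.one_le_two_pow
            have : 2 ^ (t + 1 + 2 - 1) = 2 * 2 ^ (t + 2 - 1) := by
              rw [show t + 1 + 2 - 1 = (t + 2 - 1) + 1 from rfl, pow_succ, mul_comm]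
            omega
      _ ≤ a ^ (s - 1) := Nat.pow_le_pow_left ha _
  -- basic facts about Mfun
  have hMfun : ∀ η : ℕ, Mfun a s (1 + η) = (Mfun a s 1 - 1) + (2 * s - 1) * η + 1 := by
    intro η
    unfold Mfun
    have h : (2 * s - 1) * (1 + η) = (2 * s - 1) + (2 * s - 1) * η := by ring
    omega
  have hc0 : (0 : ℝ) ≤ 2 * (s : ℝ) - 1 := by
    have : (2 : ℝ) ≤ (s : ℝ) := by exact_mod_cast hs
    linarith
  set c : ℝ := 2 * (s : ℝ) - 1 with hcdef
  -- the antitone nonneg sequence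
  set f : ℕ → ℝ := fun i => g x c ((Mfun a s 1 - 1) + (2 * s - 1) * i) with hfdef
  have hf_anti : Antitone f := by
    intro i j hij
    exact g_antitone hx1 hx hc0 (by
      have : (2 * s - 1) * i ≤ (2 * s - 1) * j := Nat.mul_le_mul_left _ hij
      omega)
  have hf_tendsto : Tendsto f atTop (nhds 0) := by
    refine (g_tendsto_zero hx1 hx hc0).comp ?_
    refine tendsto_atTop_mono (fun i => ?_) tendsto_id
    have : 1 * i ≤ (2 * s - 1) * i := Nat.mul_le_mul_right _ (by omega)
    simp only [id]
    omega
  obtain ⟨l, hl⟩ := hf_anti.tendsto_alternating_series_of_tendsto_zero hf_tendsto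
  set σ : ℝ := x * (-1 : ℝ) ^ (Mfun a s 1 - 1) with hσdef
  refine ⟨σ * l, ?_⟩
  have hodd : Odd (2 * s - 1) := ⟨s - 1, by omega⟩
  have hterm : ∀ i : ℕ,
      c * psi γ (Mfun a s (1 + i)) * (-1 : ℝ) ^ Mfun a s (1 + i) = σ * ((-1 : ℝ) ^ i * f i) := by
    intro i
    set k : ℕ := (Mfun a s 1 - 1) + (2 * s - 1) * i with hkdef
    have hM : Mfun a s (1 + i) = k + 1 := hMfun i
    have hpow : ((-1 : ℝ) ^ (k + 1)) * ((-1 : ℝ) ^ (k + 1)) = 1 := by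
      rw [← pow_add]
      exact Even.neg_one_pow ⟨k + 1, by ring⟩
    have hgb : genBinom x (k + 1) = x * (-1 : ℝ) ^ k * Q x k / (k + 1).factorial := by
      rw [genBinom, desc_eval]
    have hk_pow : (-1 : ℝ) ^ k = (-1 : ℝ) ^ (Mfun a s 1 - 1) * (-1 : ℝ) ^ i := by
      rw [hkdef, pow_add, pow_mul, hodd.neg_one_pow]
    rw [hM, psi, hgb]
    have : c * ((-1 : ℝ) ^ (k + 1) * (x * (-1 : ℝ) ^ k * Q x k / (k + 1).factorial))
        * (-1 : ℝ) ^ (k + 1)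
        = (((-1 : ℝ) ^ (k + 1)) * ((-1 : ℝ) ^ (k + 1))) * ((-1 : ℝ) ^ k)
          * (x * (c * Q x k / (k + 1).factorial)) := by ring
    rw [this, hpow, one_mul, hk_pow]
    simp only [hfdef, hσdef, g, hkdef]
    ring
  have hsum : ∀ H : ℕ, (∑ η ∈ Finset.Icc 1 H,
      c * psi γ (Mfun a s η) * (-1 : ℝ) ^ Mfun a s η)
      = σ * ∑ i ∈ Finset.range H, (-1 : ℝ) ^ i * f i := by
    intro H
    rw [← Finset.Ico_add_one_right_eq_Icc, Finset.sum_Ico_eq_sum_range]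
    simp only [Nat.succ_sub_one, Nat.add_sub_cancel, hterm]
    rw [← Finset.mul_sum]
  have := hl.const_mul σ
  exact this.congr fun H => (hsum H).symm
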